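/- Let ν be a Lévy measure with tail ν̄ and let T > 0. If f is absolutely continuous on [0,T], then the function t ↦ ∫_0^t ν̄(t−s)(f(s) − f(0)) ds is absolutely continuous on [0,T]; hence its derivative ∂_t^Φ f(t) exists for almost every t ∈ [0,T], satisfies ∂_t^Φ f(t) = ∫_0^t ν̄(t−s) f′(s) ds for almost every t ∈ [0,T], and the function t ↦ ∂_t^Φ f(t) belongs to L¹([0,T]). -/

import Mathlib

open MeasureTheory Set

/-- The tail of a Lévy measure: `ν̄(s) = ν((s,∞))`. -/
noncomputable def nubar (ν : Measure ℝ) (s : ℝ) : ℝ := (ν (Set.Ioi s)).toReal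

/-- A Lévy measure on `(0,∞)`: it gives no mass to `(-∞,0]` and integrates `min(s,1)`. -/
def IsLevyMeasure (ν : Measure ℝ) : Prop :=
  ν (Set.Iic 0) = 0 ∧ ∫⁻ s in Set.Ioi (0:ℝ), ENNReal.ofReal (min s 1) ∂ν ≠ ⊤

open ENNReal Filter Metric



lemma nubar_measurable (ν : Measure ℝ) : Measurable (nubar ν) := by
  have h : Antitone (fun s : ℝ => ν (Set.Ioi s)) :=
    fun a b hab => measure_mono (Ioi_subset_Ioi hab)
  exact ENNReal.measurable_toReal.comp h.measurable

lemma nubar_nonneg (ν : Measure ℝ) (s : ℝ) : 0 ≤ nubar ν s := ENNReal.toReal_nonneg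

lemma lintegral_tail_lt_top {ν : Measure ℝ} (hν : IsLevyMeasure ν) {T : ℝ} (hT : 0 < T) :
    ∫⁻ s in Set.Ioc (0:ℝ) T, ν (Set.Ioi s) < ⊤ := by
  set m := ν.restrict (Set.Ioi (0:ℝ)) with hm
  have h0 : (0:ℝ → ℝ) ≤ᶠ[ae m] (fun u => min u T) := by
    have : ∀ᵐ u ∂m, u ∈ Set.Ioi (0:ℝ) := ae_restrict_mem measurableSet_Ioi
    filter_upwards [this] with u hu
    exact le_min hu.le hT.le
  have hmeas : AEMeasurable (fun u : ℝ => min u T) m :=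
    (measurable_id.min measurable_const).aemeasurable
  have h1 := lintegral_eq_lintegral_meas_lt m h0 hmeas
  have hfin : ∫⁻ u, ENNReal.ofReal (min u T) ∂m < ⊤ := by
    have hb : ∀ᵐ u ∂m, ENNReal.ofReal (min u T) ≤
        ENNReal.ofReal (max T 1) * ENNReal.ofReal (min u 1) := by
      have : ∀ᵐ u ∂m, u ∈ Set.Ioi (0:ℝ) := ae_restrict_mem measurableSet_Ioi
      filter_upwards [this] with u hu
      rw [← ENNReal.ofReal_mul (le_max_of_le_right zero_le_one)]
      apply ENNReal.ofReal_le_ofReal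
      rcases le_total u 1 with h | h
      · rw [min_eq_left h]
        calc min u T ≤ u := min_le_left _ _
          _ = 1 * u := (one_mul u).symm
          _ ≤ max T 1 * u := mul_le_mul_of_nonneg_right (le_max_right T 1) hu.le
      · rw [min_eq_right h]
        calc min u T ≤ T := min_le_right _ _
          _ = T * 1 := (mul_one T).symm
          _ ≤ max T 1 * 1 := mul_le_mul_of_nonneg_right (le_max_left T 1) zero_le_one
    calc ∫⁻ u, ENNReal.ofReal (min u T) ∂m
        ≤ ∫⁻ u, ENNReal.ofReal (max T 1) * ENNReal.ofReal (min u 1) ∂m :=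
          lintegral_mono_ae hb
      _ = ENNReal.ofReal (max T 1) * ∫⁻ u, ENNReal.ofReal (min u 1) ∂m :=
          lintegral_const_mul' _ _ ENNReal.ofReal_ne_top
      _ < ⊤ := ENNReal.mul_lt_top ENNReal.ofReal_lt_top (lt_top_iff_ne_top.2 hν.2)
  have key : ∫⁻ s in Set.Ioo (0:ℝ) T, ν (Set.Ioi s) ≤ ∫⁻ u, ENNReal.ofReal (min u T) ∂m := by
    rw [h1]
    have hsub : Set.Ioo (0:ℝ) T ⊆ Set.Ioi 0 := Set.Ioo_subset_Ioi_self
    refine le_trans (le_of_eq ?_) (lintegral_mono_set hsub)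
    apply setLIntegral_congr_fun measurableSet_Ioo
    intro t ht
    beta_reduce
    have hset : {u : ℝ | t < min u T} = Set.Ioi t := by
      ext u; simp only [Set.mem_setOf_eq, lt_min_iff, Set.mem_Ioi]
      exact ⟨fun h => h.1, fun h => ⟨h, ht.2⟩⟩
    rw [hset, hm, Measure.restrict_apply measurableSet_Ioi,
      Set.inter_eq_self_of_subset_left (Ioi_subset_Ioi ht.1.le)]
  have hIoc : ∫⁻ s in Set.Ioc (0:ℝ) T, ν (Set.Ioi s) =
      ∫⁻ s in Set.Ioo (0:ℝ) T, ν (Set.Ioi s) := by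
    apply setLIntegral_congr
    exact (MeasureTheory.Ioo_ae_eq_Ioc (a := (0:ℝ)) (b := T)).symm
  rw [hIoc]
  exact lt_of_le_of_lt key hfin

lemma nubar_integrableOn {ν : Measure ℝ} (hν : IsLevyMeasure ν) {T : ℝ} (hT : 0 < T) :
    IntegrableOn (nubar ν) (Set.Ioc 0 T) := by
  refine ⟨(nubar_measurable ν).aestronglyMeasurable, ?_⟩
  rw [hasFiniteIntegral_def]
  have : ∫⁻ s in Set.Ioc (0:ℝ) T, ‖nubar ν s‖₊ < ⊤ := by
    calc ∫⁻ s in Set.Ioc (0:ℝ) T, ‖nubar ν s‖₊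
        ≤ ∫⁻ s in Set.Ioc (0:ℝ) T, ν (Set.Ioi s) := by
          apply lintegral_mono
          intro s
          show (‖nubar ν s‖₊ : ℝ≥0∞) ≤ ν (Ioi s)
          rw [show ((‖nubar ν s‖₊ : ℝ≥0∞)) = ENNReal.ofReal (nubar ν s) from Real.enorm_eq_ofReal (nubar_nonneg ν s)]
          exact ENNReal.ofReal_toReal_le
      _ < ⊤ := lintegral_tail_lt_top hν hT
  exact this


lemma ae_hasDerivAt_primitive {G : ℝ → ℝ} (hG : Integrable G (volume : Measure ℝ)) :
    ∀ᵐ x ∂(volume : Measure ℝ), HasDerivAt (fun u => ∫ s in (0:ℝ)..u, G s) (G x) x := by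
  have hloc : LocallyIntegrable G volume := hG.locallyIntegrable
  filter_upwards [IsUnifLocDoublingMeasure.ae_tendsto_average_norm_sub
    (volume : Measure ℝ) hloc 1] with x hx
  have hδ : Tendsto (fun y : ℝ => |y - x|) (nhdsWithin x {x}ᶜ) (nhdsWithin 0 (Ioi 0)) := by
    rw [tendsto_nhdsWithin_iff]
    constructor
    · have : Tendsto (fun y : ℝ => |y - x|) (nhds x) (nhds 0) := by
        have h := ((continuous_sub_right x).abs).tendsto x
        simpa using h
      exact this.mono_left nhdsWithin_le_nhds
    · filter_upwards [self_mem_nhdsWithin] with y hy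
      exact abs_pos.2 (sub_ne_zero.2 hy)
  have hmem : ∀ᶠ y in nhdsWithin x {x}ᶜ, x ∈ closedBall x (1 * |y - x|) := by
    filter_upwards with y
    simp [abs_nonneg]
  have havg := hx (fun _ : ℝ => x) (fun y => |y - x|) hδ hmem
  -- havg : Tendsto (fun y => ⨍ z in closedBall x |y - x|, ‖G z - G x‖) (𝓝[≠] x) (𝓝 0)
  rw [hasDerivAt_iff_tendsto_slope]
  set H := fun u => ∫ s in (0:ℝ)..u, G s with hH
  have key : ∀ y : ℝ, y ≠ x →
      ‖slope H x y - G x‖ ≤ 2 * ⨍ z in closedBall x |y - x|, ‖G z - G x‖ := by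
    intro y hy
    have hyx : y - x ≠ 0 := sub_ne_zero.2 hy
    have hII : ∀ a b : ℝ, IntervalIntegrable G volume a b := fun a b =>
      hG.intervalIntegrable
    have hHsub : H y - H x = ∫ s in x..y, G s :=
      intervalIntegral.integral_interval_sub_left (hII 0 y) (hII 0 x)
    have hslope : slope H x y - G x = (∫ s in x..y, (G s - G x)) / (y - x) := by
      rw [intervalIntegral.integral_sub (hII x y) intervalIntegrable_const,
        intervalIntegral.integral_const, ← hHsub, sub_div, slope_def_field, smul_eq_mul]
      congr 1
      rw [mul_comm, mul_div_assoc, div_self hyx, mul_one]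
    have hpos : 0 < |y - x| := abs_pos.2 hyx
    have hsub : Set.uIoc x y ⊆ closedBall x |y - x| := by
      intro z hz
      have h1 := hz.1
      have h2 := hz.2
      have hmax := max_sub_min_eq_abs x y
      have habs : |x - y| = |y - x| := abs_sub_comm x y
      rw [mem_closedBall, Real.dist_eq]
      rw [abs_le]
      constructor
      · have := min_le_left x y
        nlinarith [abs_nonneg (y - x), le_max_left x y]
      · have := le_max_left x y
        nlinarith [min_le_left x y]
    have h1 : ‖slope H x y - G x‖ ≤ (∫ z in Set.uIoc x y, ‖G z - G x‖) / |y - x| := by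
      rw [hslope, Real.norm_eq_abs, abs_div]
      gcongr
      · have h := intervalIntegral.norm_integral_le_integral_norm_uIoc
            (f := fun s => G s - G x) (a := x) (b := y) (μ := volume)
        simpa [Real.norm_eq_abs] using h
    have h2 : ∫ z in Set.uIoc x y, ‖G z - G x‖ ≤
        ∫ z in closedBall x |y - x|, ‖G z - G x‖ := by
      apply setIntegral_mono_set
      · exact ((hG.integrableOn.sub
            (integrableOn_const measure_closedBall_lt_top.ne)).norm)
      · filter_upwards with z using norm_nonneg _
      · exact HasSubset.Subset.eventuallyLE hsub
    have h3 : ∫ z in closedBall x |y - x|, ‖G z - G x‖ =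
        (2 * |y - x|) * ⨍ z in closedBall x |y - x|, ‖G z - G x‖ := by
      rw [setAverage_eq, Real.volume_real_closedBall (by positivity),
        smul_eq_mul, ← mul_assoc, mul_inv_cancel₀ (by positivity), one_mul]
    calc ‖slope H x y - G x‖ ≤ (∫ z in Set.uIoc x y, ‖G z - G x‖) / |y - x| := h1
      _ ≤ (∫ z in closedBall x |y - x|, ‖G z - G x‖) / |y - x| := by gcongr
      _ = ((2 * |y - x|) * ⨍ z in closedBall x |y - x|, ‖G z - G x‖) / |y - x| := by rw [h3]
      _ = 2 * ⨍ z in closedBall x |y - x|, ‖G z - G x‖ := by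
          field_simp
  have hbound : ∀ᶠ y in nhdsWithin x {x}ᶜ,
      ‖slope H x y - G x‖ ≤ 2 * ⨍ z in closedBall x |y - x|, ‖G z - G x‖ := by
    filter_upwards [self_mem_nhdsWithin] with y hy using key y hy
  have h2avg : Tendsto (fun y => 2 * ⨍ z in closedBall x |y - x|, ‖G z - G x‖)
      (nhdsWithin x {x}ᶜ) (nhds 0) := by simpa using havg.const_mul (2:ℝ)
  exact tendsto_sub_nhds_zero_iff.mp (squeeze_zero_norm' hbound h2avg)


section Fubini

variable {K φ : ℝ → ℝ} {t : ℝ}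

lemma inter_Iic {t r : ℝ} (hr : r ≤ t) : Ioc 0 t ∩ Iic r = Ioc 0 r := by
  ext x
  simp only [mem_inter_iff, mem_Ioc, mem_Iic]
  exact ⟨fun ⟨⟨a, _⟩, c⟩ => ⟨a, c⟩, fun ⟨a, c⟩ => ⟨⟨a, c.trans hr⟩, c⟩⟩

lemma inter_Ici {t s : ℝ} (hs : 0 < s) : Ioc 0 t ∩ Ici s = Icc s t := by
  ext x
  simp only [mem_inter_iff, mem_Ioc, mem_Ici, mem_Icc]
  exact ⟨fun ⟨⟨_, b⟩, c⟩ => ⟨c, b⟩, fun ⟨a, b⟩ => ⟨⟨lt_of_lt_of_le hs a, b⟩, a⟩⟩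

/-- translation identity -/
lemma integral_Icc_comp_sub (K : ℝ → ℝ) {s t : ℝ} (hst : s ≤ t) :
    ∫ r in Icc s t, K (r - s) = ∫ x in (0:ℝ)..(t - s), K x := by
  rw [MeasureTheory.integral_Icc_eq_integral_Ioc,
    ← intervalIntegral.integral_of_le hst, intervalIntegral.integral_comp_sub_right K s,
    sub_self]

/-- reflection identity -/
lemma integral_Icc_comp_sub_left (K : ℝ → ℝ) {u t : ℝ} (hut : u ≤ t) :
    ∫ s in Icc u t, K (t - s) = ∫ x in (0:ℝ)..(t - u), K x := by
  rw [MeasureTheory.integral_Icc_eq_integral_Ioc,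
    ← intervalIntegral.integral_of_le hut, intervalIntegral.integral_comp_sub_left K t,
    sub_self]

lemma primitive_bound (hKint : Integrable K (volume : Measure ℝ)) (x : ℝ) :
    ‖∫ u in (0:ℝ)..x, K u‖ ≤ ∫ z, ‖K z‖ := by
  calc ‖∫ u in (0:ℝ)..x, K u‖ ≤ ∫ u in Set.uIoc 0 x, ‖K u‖ :=
        intervalIntegral.norm_integral_le_integral_norm_uIoc
    _ ≤ ∫ z, ‖K z‖ := setIntegral_le_integral hKint.norm
        (Filter.Eventually.of_forall fun z => norm_nonneg _)

lemma fubiniB (hKm : Measurable K) (hK0 : ∀ x, 0 ≤ K x)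
    (hKint : Integrable K (volume : Measure ℝ))
    (hφm : StronglyMeasurable φ) (hφint : IntegrableOn φ (Ioc 0 t)) (ht : 0 ≤ t) :
    (∫ r in Ioc (0:ℝ) t, (∫ s in Ioc (0:ℝ) r, K (r - s) * φ s))
        = ∫ s in Ioc (0:ℝ) t, (∫ x in (0:ℝ)..(t - s), K x) * φ s
      ∧ Integrable (fun r => ∫ s in Ioc (0:ℝ) r, K (r - s) * φ s)
          (volume.restrict (Ioc 0 t)) := by
  set μt := volume.restrict (Ioc (0:ℝ) t) with hμt
  set Ψ : ℝ × ℝ → ℝ :=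
    fun p => ({q : ℝ × ℝ | q.2 ≤ q.1}).indicator (fun q => K (q.1 - q.2) * φ q.2) p with hΨ
  have hΨm : AEStronglyMeasurable Ψ (μt.prod μt) := by
    apply Measurable.aestronglyMeasurable
    exact Measurable.indicator
      ((hKm.comp (measurable_fst.sub measurable_snd)).mul (hφm.measurable.comp measurable_snd))
      (measurableSet_le measurable_snd measurable_fst)
  -- rows
  have hrow_eq : ∀ s : ℝ, (fun r => Ψ (r, s)) = (Ici s).indicator (fun r => K (r - s) * φ s) := by
    intro s
    funext r
    simp only [hΨ, Set.indicator, Set.mem_setOf_eq, Set.mem_Ici]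
  have hrow : ∀ s ∈ Ioc (0:ℝ) t, Integrable (fun r => Ψ (r, s)) μt := by
    intro s hs
    rw [hrow_eq s, integrable_indicator_iff measurableSet_Ici]
    exact (((hKint.comp_sub_right s).mul_const (φ s)).restrict).integrableOn
  -- norm of rows
  have hnorm_eq : ∀ s ∈ Ioc (0:ℝ) t,
      (∫ r, ‖Ψ (r, s)‖ ∂μt) = (∫ x in (0:ℝ)..(t - s), K x) * |φ s| := by
    intro s hs
    have h1 : (fun r => ‖Ψ (r, s)‖) = (Ici s).indicator (fun r => K (r - s) * |φ s|) := by
      funext r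
      rw [congrFun (hrow_eq s) r, norm_indicator_eq_indicator_norm]
      simp only [Set.indicator]
      split
      · rw [Real.norm_eq_abs, abs_mul, abs_of_nonneg (hK0 _)]
      · rfl
    rw [h1, hμt, integral_indicator measurableSet_Ici,
      Measure.restrict_restrict measurableSet_Ici, Set.inter_comm (Ici s) (Ioc 0 t),
      inter_Ici hs.1, MeasureTheory.integral_mul_const, integral_Icc_comp_sub K hs.2]
  -- integrability on the product
  have hInt : Integrable Ψ (μt.prod μt) := by
    rw [integrable_prod_iff' hΨm]
    constructor
    · filter_upwards [ae_restrict_mem measurableSet_Ioc] with s hs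
      exact hrow s hs
    · have hgood : Integrable (fun s => (∫ x in (0:ℝ)..(t - s), K x) * |φ s|) μt := by
        apply Integrable.bdd_mul (c := ∫ z, ‖K z‖) hφint.abs
        · apply Continuous.aestronglyMeasurable
          exact (intervalIntegral.continuous_primitive
            (fun a b => hKint.intervalIntegrable) 0).comp (continuous_const.sub continuous_id)
        · exact Filter.Eventually.of_forall fun x => primitive_bound hKint _
      apply hgood.congr
      filter_upwards [ae_restrict_mem measurableSet_Ioc] with s hs
      exact (hnorm_eq s hs).symm
  -- inner integral in the r-slices
  have hslice : ∀ r ∈ Ioc (0:ℝ) t,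
      (∫ s, Ψ (r, s) ∂μt) = ∫ s in Ioc (0:ℝ) r, K (r - s) * φ s := by
    intro r hr
    have h1 : (fun s => Ψ (r, s)) = (Iic r).indicator (fun s => K (r - s) * φ s) := by
      funext s
      simp only [hΨ, Set.indicator, Set.mem_setOf_eq, Set.mem_Iic]
    rw [h1, hμt, integral_indicator measurableSet_Iic,
      Measure.restrict_restrict measurableSet_Iic, Set.inter_comm (Iic r) (Ioc 0 t),
      inter_Iic hr.2]
  constructor
  · -- the swap
    have hswap := MeasureTheory.integral_integral_swap
      (f := fun r s => Ψ (r, s)) (μ := μt) (ν := μt) (by exact hInt)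
    calc (∫ r in Ioc (0:ℝ) t, (∫ s in Ioc (0:ℝ) r, K (r - s) * φ s))
        = ∫ r, (∫ s, Ψ (r, s) ∂μt) ∂μt := by
          apply integral_congr_ae
          filter_upwards [ae_restrict_mem measurableSet_Ioc] with r hr
          exact (hslice r hr).symm
      _ = ∫ s, (∫ r, Ψ (r, s) ∂μt) ∂μt := hswap
      _ = ∫ s in Ioc (0:ℝ) t, (∫ x in (0:ℝ)..(t - s), K x) * φ s := by
          apply integral_congr_ae
          filter_upwards [ae_restrict_mem measurableSet_Ioc] with s hs
          rw [hrow_eq s, hμt, integral_indicator measurableSet_Ici,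
            Measure.restrict_restrict measurableSet_Ici, Set.inter_comm (Ici s) (Ioc 0 t),
            inter_Ici hs.1, MeasureTheory.integral_mul_const, integral_Icc_comp_sub K hs.2]
  · apply Integrable.congr (hInt.integral_prod_left)
    filter_upwards [ae_restrict_mem measurableSet_Ioc] with r hr
    exact hslice r hr

lemma fubiniA (hKm : Measurable K) (hK0 : ∀ x, 0 ≤ K x)
    (hKint : Integrable K (volume : Measure ℝ))
    (hφm : StronglyMeasurable φ) (hφint : IntegrableOn φ (Ioc 0 t)) (ht : 0 ≤ t) :
    (∫ s in Ioc (0:ℝ) t, K (t - s) * (∫ u in Ioc (0:ℝ) s, φ u))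
      = ∫ u in Ioc (0:ℝ) t, (∫ x in (0:ℝ)..(t - u), K x) * φ u := by
  set μt := volume.restrict (Ioc (0:ℝ) t) with hμt
  set Ψ : ℝ × ℝ → ℝ :=
    fun p => ({q : ℝ × ℝ | q.2 ≤ q.1}).indicator (fun q => K (t - q.1) * φ q.2) p with hΨ
  have hΨm : AEStronglyMeasurable Ψ (μt.prod μt) := by
    apply Measurable.aestronglyMeasurable
    exact Measurable.indicator
      ((hKm.comp (measurable_const.sub measurable_fst)).mul (hφm.measurable.comp measurable_snd))
      (measurableSet_le measurable_snd measurable_fst)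
  have hInt : Integrable Ψ (μt.prod μt) := by
    have hg : Integrable (fun p : ℝ × ℝ => K (t - p.1) * |φ p.2|) (μt.prod μt) := by
      exact Integrable.mul_prod (L := ℝ) (f := fun s => K (t - s)) (g := fun u => |φ u|)
        ((hKint.comp_sub_left t).restrict (s := Ioc 0 t)) hφint.abs
    apply hg.mono' hΨm
    filter_upwards with p
    calc ‖Ψ p‖ ≤ ‖K (t - p.1) * φ p.2‖ := norm_indicator_le_norm_self _ _
      _ = K (t - p.1) * |φ p.2| := by
          rw [Real.norm_eq_abs, abs_mul, abs_of_nonneg (hK0 _)]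
  have hswap := MeasureTheory.integral_integral_swap
    (f := fun r s => Ψ (r, s)) (μ := μt) (ν := μt) (by exact hInt)
  calc (∫ s in Ioc (0:ℝ) t, K (t - s) * (∫ u in Ioc (0:ℝ) s, φ u))
      = ∫ s, (∫ u, Ψ (s, u) ∂μt) ∂μt := by
        apply integral_congr_ae
        filter_upwards [ae_restrict_mem measurableSet_Ioc] with s hs
        have h1 : (fun u => Ψ (s, u)) = (Iic s).indicator (fun u => K (t - s) * φ u) := by
          funext u
          simp only [hΨ, Set.indicator, Set.mem_setOf_eq, Set.mem_Iic]
        rw [h1, hμt, integral_indicator measurableSet_Iic,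
          Measure.restrict_restrict measurableSet_Iic, Set.inter_comm (Iic s) (Ioc 0 t),
          inter_Iic hs.2, MeasureTheory.integral_const_mul]
    _ = ∫ u, (∫ s, Ψ (s, u) ∂μt) ∂μt := hswap
    _ = ∫ u in Ioc (0:ℝ) t, (∫ x in (0:ℝ)..(t - u), K x) * φ u := by
        apply integral_congr_ae
        filter_upwards [ae_restrict_mem measurableSet_Ioc] with u hu
        have h1 : (fun s => Ψ (s, u)) = (Ici u).indicator (fun s => K (t - s) * φ u) := by
          funext s
          simp only [hΨ, Set.indicator, Set.mem_setOf_eq, Set.mem_Ici]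
        rw [h1, hμt, integral_indicator measurableSet_Ici,
          Measure.restrict_restrict measurableSet_Ici, Set.inter_comm (Ici u) (Ioc 0 t),
          inter_Ici hu.1, MeasureTheory.integral_mul_const,
          integral_Icc_comp_sub_left K hu.2]

end Fubini


/-- for `f` absolutely continuous on `[0,T]` (written via its FTC
representation with `f' ∈ L¹`), the function
`g(t) = ∫_0^t ν̄(t-s)(f(s)-f(0)) ds` is absolutely continuous on `[0,T]`
(i.e. it is the indefinite integral of the `L¹` function
`t ↦ ∫_0^t ν̄(t-s) f'(s) ds`), and hence `∂ₜ^Φ f (t)` exists for a.e. `t ∈ [0,T]`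
and equals `∫_0^t ν̄(t-s) f'(s) ds` there. -/
theorem stmt_0 (ν : Measure ℝ) (hν : IsLevyMeasure ν)
    (T : ℝ) (hT : 0 < T) (f f' : ℝ → ℝ)
    (hf'int : MeasureTheory.IntegrableOn f' (Set.Icc 0 T))
    (hfAC : ∀ t ∈ Set.Icc (0:ℝ) T, f t = f 0 + ∫ s in (0:ℝ)..t, f' s) :
    MeasureTheory.IntegrableOn
        (fun t => ∫ s in (0:ℝ)..t, nubar ν (t - s) * f' s) (Set.Icc 0 T)
      ∧ (∀ t ∈ Set.Icc (0:ℝ) T,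
          (∫ s in (0:ℝ)..t, nubar ν (t - s) * (f s - f 0))
            = ∫ r in (0:ℝ)..t, (∫ s in (0:ℝ)..r, nubar ν (r - s) * f' s))
      ∧ (∀ᵐ t ∂(volume.restrict (Set.Icc (0:ℝ) T)),
          HasDerivAt (fun τ => ∫ s in (0:ℝ)..τ, nubar ν (τ - s) * (f s - f 0))
            (∫ s in (0:ℝ)..t, nubar ν (t - s) * f' s) t) := by
  obtain ⟨φ, hφm, hφae⟩ : ∃ φ, StronglyMeasurable φ ∧ f' =ᵐ[volume.restrict (Icc 0 T)] φ :=
    ⟨hf'int.1.mk f', hf'int.1.stronglyMeasurable_mk, hf'int.1.ae_eq_mk⟩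
  set K := (Ioc (0:ℝ) T).indicator (nubar ν) with hK
  have hKm : Measurable K := (nubar_measurable ν).indicator measurableSet_Ioc
  have hK0 : ∀ x, 0 ≤ K x := fun x =>
    Set.indicator_nonneg (fun y _ => nubar_nonneg ν y) x
  have hKint : Integrable K volume :=
    (nubar_integrableOn hν hT).integrable_indicator measurableSet_Ioc
  have hφint : IntegrableOn φ (Icc 0 T) := hf'int.congr hφae
  have hφIoc : ∀ t ∈ Icc (0:ℝ) T, IntegrableOn φ (Ioc 0 t) := fun t ht =>
    hφint.mono_set (fun x hx => ⟨hx.1.le, hx.2.trans ht.2⟩)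
  have hf'aev : ∀ᵐ x ∂(volume : Measure ℝ), x ∈ Icc (0:ℝ) T → f' x = φ x :=
    (ae_restrict_iff' measurableSet_Icc).1 hφae
  -- pointwise interval-integral congruences
  have hne : ∀ r : ℝ, ∀ᵐ s : ℝ ∂(volume : Measure ℝ), s ≠ r := by
    intro r
    have hs : {s : ℝ | ¬ s ≠ r} = {r} := by ext s; simp
    rw [ae_iff, hs]
    exact measure_singleton r
  have eq1 : ∀ r ∈ Icc (0:ℝ) T,
      (∫ s in (0:ℝ)..r, nubar ν (r - s) * f' s) = ∫ s in Ioc (0:ℝ) r, K (r - s) * φ s := by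
    intro r hr
    rw [intervalIntegral.integral_of_le hr.1]
    apply setIntegral_congr_ae measurableSet_Ioc
    filter_upwards [hf'aev, hne r] with s hs1 hs2 hsmem
    have h1 : f' s = φ s := hs1 ⟨hsmem.1.le, hsmem.2.trans hr.2⟩
    have h2 : K (r - s) = nubar ν (r - s) := by
      apply Set.indicator_of_mem
      constructor
      · exact sub_pos.2 (lt_of_le_of_ne hsmem.2 hs2)
      · have := hsmem.1
        have := hr.2
        linarith
    rw [h1, h2]
  have eq2 : ∀ t ∈ Icc (0:ℝ) T,
      (∫ s in (0:ℝ)..t, nubar ν (t - s) * (f s - f 0))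
        = ∫ s in Ioc (0:ℝ) t, K (t - s) * (∫ u in Ioc (0:ℝ) s, φ u) := by
    intro t ht
    rw [intervalIntegral.integral_of_le ht.1]
    apply setIntegral_congr_ae measurableSet_Ioc
    filter_upwards [hf'aev, hne t] with s hs1 hs2 hsmem
    have hsIcc : s ∈ Icc (0:ℝ) T := ⟨hsmem.1.le, hsmem.2.trans ht.2⟩
    have h2 : K (t - s) = nubar ν (t - s) := by
      apply Set.indicator_of_mem
      refine ⟨sub_pos.2 (lt_of_le_of_ne hsmem.2 hs2), ?_⟩
      have := hsmem.1
      have := ht.2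
      linarith
    have h3 : f s - f 0 = ∫ u in Ioc (0:ℝ) s, φ u := by
      rw [hfAC s hsIcc]
      rw [intervalIntegral.integral_of_le hsIcc.1]
      have : (∫ u in Ioc (0:ℝ) s, f' u) = ∫ u in Ioc (0:ℝ) s, φ u := by
        apply setIntegral_congr_ae measurableSet_Ioc
        filter_upwards [hf'aev] with u hu1 humem
        exact hu1 ⟨humem.1.le, humem.2.trans hsIcc.2⟩
      rw [this]
      ring
    rw [h2, h3]
  -- Fubini at T for the first bullet
  have hTIcc : T ∈ Icc (0:ℝ) T := ⟨hT.le, le_refl T⟩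
  obtain ⟨hBeqT, hBintT⟩ := fubiniB hKm hK0 hKint hφm (hφIoc T hTIcc) hT.le
  have bullet1 : MeasureTheory.IntegrableOn
      (fun t => ∫ s in (0:ℝ)..t, nubar ν (t - s) * f' s) (Set.Icc 0 T) := by
    have hIoc : MeasureTheory.IntegrableOn
        (fun t => ∫ s in (0:ℝ)..t, nubar ν (t - s) * f' s) (Set.Ioc 0 T) := by
      apply hBintT.congr
      filter_upwards [ae_restrict_mem measurableSet_Ioc] with r hr
      exact (eq1 r ⟨hr.1.le, hr.2⟩).symm
    exact hIoc.congr_set_ae (MeasureTheory.Ioc_ae_eq_Icc (a := (0:ℝ)) (b := T)).symm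
  have bullet2 : ∀ t ∈ Set.Icc (0:ℝ) T,
      (∫ s in (0:ℝ)..t, nubar ν (t - s) * (f s - f 0))
        = ∫ r in (0:ℝ)..t, (∫ s in (0:ℝ)..r, nubar ν (r - s) * f' s) := by
    intro t ht
    obtain ⟨hBeq, _⟩ := fubiniB hKm hK0 hKint hφm (hφIoc t ht) ht.1
    have hA := fubiniA hKm hK0 hKint hφm (hφIoc t ht) ht.1
    calc (∫ s in (0:ℝ)..t, nubar ν (t - s) * (f s - f 0))
        = ∫ s in Ioc (0:ℝ) t, K (t - s) * (∫ u in Ioc (0:ℝ) s, φ u) := eq2 t ht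
      _ = ∫ u in Ioc (0:ℝ) t, (∫ x in (0:ℝ)..(t - u), K x) * φ u := hA
      _ = ∫ r in Ioc (0:ℝ) t, (∫ s in Ioc (0:ℝ) r, K (r - s) * φ s) := hBeq.symm
      _ = ∫ r in Ioc (0:ℝ) t, (∫ s in (0:ℝ)..r, nubar ν (r - s) * f' s) := by
          apply setIntegral_congr_ae measurableSet_Ioc
          filter_upwards with r hr
          exact (eq1 r ⟨hr.1.le, hr.2.trans ht.2⟩).symm
      _ = ∫ r in (0:ℝ)..t, (∫ s in (0:ℝ)..r, nubar ν (r - s) * f' s) :=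
          (intervalIntegral.integral_of_le ht.1).symm
  refine ⟨bullet1, bullet2, ?_⟩
  -- third bullet
  set Ginner := fun r => ∫ s in (0:ℝ)..r, nubar ν (r - s) * f' s with hGinner
  set GT := (Icc (0:ℝ) T).indicator Ginner with hGT
  have hGTint : Integrable GT volume := bullet1.integrable_indicator measurableSet_Icc
  have hLDT := ae_hasDerivAt_primitive hGTint
  set H := fun u => ∫ s in (0:ℝ)..u, GT s with hH
  have heq : ∀ τ ∈ Icc (0:ℝ) T,
      (∫ s in (0:ℝ)..τ, nubar ν (τ - s) * (f s - f 0)) = H τ := by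
    intro τ hτ
    rw [bullet2 τ hτ]
    show (∫ r in (0:ℝ)..τ, Ginner r) = ∫ s in (0:ℝ)..τ, GT s
    rw [intervalIntegral.integral_of_le hτ.1, intervalIntegral.integral_of_le hτ.1]
    apply setIntegral_congr_fun measurableSet_Ioc
    intro r hr
    have hrIcc : r ∈ Icc (0:ℝ) T := ⟨hr.1.le, hr.2.trans hτ.2⟩
    exact (Set.indicator_of_mem hrIcc Ginner).symm
  have h0T : ∀ᵐ x ∂(volume : Measure ℝ), x ≠ 0 ∧ x ≠ T := by
    filter_upwards [hne 0, hne T] with x h1 h2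
    exact ⟨h1, h2⟩
  filter_upwards [ae_restrict_of_ae hLDT, ae_restrict_mem measurableSet_Icc,
    ae_restrict_of_ae h0T] with t hder htIcc ht0T
  have htIoo : t ∈ Ioo (0:ℝ) T :=
    ⟨lt_of_le_of_ne htIcc.1 (Ne.symm ht0T.1), lt_of_le_of_ne htIcc.2 ht0T.2⟩
  have hnhds : Icc (0:ℝ) T ∈ nhds t := Icc_mem_nhds htIoo.1 htIoo.2
  have hGTt : GT t = Ginner t := Set.indicator_of_mem htIcc Ginner
  have hfinal : HasDerivAt (fun τ => ∫ s in (0:ℝ)..τ, nubar ν (τ - s) * (f s - f 0))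
      (GT t) t := by
    apply hder.congr_of_eventuallyEq
    exact Filter.eventuallyEq_of_mem hnhds (fun τ hτ => heq τ hτ)
  rw [hGTt] at hfinal
  exact hfinal
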